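/- Every normal λ_CL-term is in parallel form: it is either a simply typed λ-term, or of the form u ∥_a v or u ∥ v where u and v are parallel forms. -/

import Mathlib

/-- Propositional formulas: atoms, ⊥, implication, conjunction. -/
inductive Formula : Type where
  | atom : Nat → Formula
  | bot  : Formula
  | imp  : Formula → Formula → Formula
  | conj : Formula → Formula → Formula
deriving DecidableEq

/-- A formula is prime if it is not a conjunction. -/
def Formula.IsPrime : Formula → Prop
  | .conj _ _ => False
  | _ => True

/-- Atomic formulas (atoms and ⊥). -/
def Formula.IsAtomic : Formula → Prop
  | .atom _ => True
  | .bot => True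
  | _ => False

/-- Subformula relation. -/
inductive Subformula : Formula → Formula → Prop where
  | refl (A : Formula) : Subformula A A
  | impL : Subformula A B → Subformula A (Formula.imp B C)
  | impR : Subformula A C → Subformula A (Formula.imp B C)
  | conjL : Subformula A B → Subformula A (Formula.conj B C)
  | conjR : Subformula A C → Subformula A (Formula.conj B C)

/-- Proper subformula: subformula and not equal. -/
def ProperSub (A B : Formula) : Prop := Subformula A B ∧ A ≠ B

/-- B is a strong subformula of A: a proper subformula of some prime
proper subformula of A. -/
def StrongSub (B A : Formula) : Prop :=
  ∃ P, Formula.IsPrime P ∧ ProperSub P A ∧ ProperSub B P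

/-- `ConjList A l` : A is the conjunction of the (nonempty) list of formulas l. -/
inductive ConjList : Formula → List Formula → Prop where
  | single (A : Formula) : ConjList A [A]
  | conj : ConjList A l → ConjList B m → ConjList (Formula.conj A B) (l ++ m)

/-- P is a prime factor of A: A is a conjunction of prime formulas among which P. -/
def PrimeFactor (P A : Formula) : Prop :=
  ∃ l, ConjList A l ∧ (∀ Q ∈ l, Formula.IsPrime Q) ∧ P ∈ l

/-- Number of symbols of a formula. -/
def Formula.size : Formula → Nat
  | .atom _ => 1
  | .bot => 1
  | .imp A B => A.size + B.size + 1
  | .conj A B => A.size + B.size + 1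

/-- The canonical list of prime factors of a formula. -/
def primeFactors : Formula → List Formula
  | .conj A B => primeFactors A ++ primeFactors B
  | A => [A]
/-- λ_CL terms (de Bruijn): simply typed λ-terms plus the parallel operators
`parC A u v` (u ∥ₐ v with communication kind A, binding channel variable 0,
of type ¬A in u and A in v) and `par u v` (u ∥ v). -/
inductive TermCL : Type where
  | var : Nat → TermCL
  | lam : Formula → TermCL → TermCL
  | app : TermCL → TermCL → TermCL
  | pair : TermCL → TermCL → TermCL
  | proj : Bool → TermCL → TermCL
  | efq : Formula → TermCL → TermCL
  | parC : Formula → TermCL → TermCL → TermCL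
  | par : TermCL → TermCL → TermCL
deriving DecidableEq

def liftF (f : Nat → Nat) : Nat → Nat
  | 0 => 0
  | n+1 => f n + 1

def TermCL.rename (f : Nat → Nat) : TermCL → TermCL
  | .var n => .var (f n)
  | .lam A t => .lam A (t.rename (liftF f))
  | .app t u => .app (t.rename f) (u.rename f)
  | .pair t u => .pair (t.rename f) (u.rename f)
  | .proj b t => .proj b (t.rename f)
  | .efq A t => .efq A (t.rename f)
  | .parC A u v => .parC A (u.rename (liftF f)) (v.rename (liftF f))
  | .par u v => .par (u.rename f) (v.rename f)

/-- Shift all free variables up by one. -/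
def liftT : TermCL → TermCL := TermCL.rename Nat.succ
/-- Shift all free variables except 0 up by one. -/
def liftU1 : TermCL → TermCL := TermCL.rename (liftF Nat.succ)
/-- Swap the variables 0 and 1. -/
def swap01 : TermCL → TermCL :=
  TermCL.rename (fun n => match n with | 0 => 1 | 1 => 0 | m => m)

/-- Substitution of `s` for variable `k` (variables above `k` shift down). -/
def TermCL.subst (k : Nat) (s : TermCL) : TermCL → TermCL
  | .var n => if n = k then s else if k < n then .var (n-1) else .var n
  | .lam A t => .lam A (TermCL.subst (k+1) (s.rename Nat.succ) t)
  | .app t u => .app (TermCL.subst k s t) (TermCL.subst k s u)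
  | .pair t u => .pair (TermCL.subst k s t) (TermCL.subst k s u)
  | .proj b t => .proj b (TermCL.subst k s t)
  | .efq A t => .efq A (TermCL.subst k s t)
  | .parC A u v => .parC A (TermCL.subst (k+1) (s.rename Nat.succ) u)
      (TermCL.subst (k+1) (s.rename Nat.succ) v)
  | .par u v => .par (TermCL.subst k s u) (TermCL.subst k s v)

def liftσ (σ : Nat → TermCL) : Nat → TermCL
  | 0 => .var 0
  | n+1 => (σ n).rename Nat.succ

/-- Simultaneous substitution. -/
def TermCL.msubst (σ : Nat → TermCL) : TermCL → TermCL
  | .var n => σ n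
  | .lam A t => .lam A (TermCL.msubst (liftσ σ) t)
  | .app t u => .app (TermCL.msubst σ t) (TermCL.msubst σ u)
  | .pair t u => .pair (TermCL.msubst σ t) (TermCL.msubst σ u)
  | .proj b t => .proj b (TermCL.msubst σ t)
  | .efq A t => .efq A (TermCL.msubst σ t)
  | .parC A u v => .parC A (TermCL.msubst (liftσ σ) u) (TermCL.msubst (liftσ σ) v)
  | .par u v => .par (TermCL.msubst σ u) (TermCL.msubst σ v)

/-- `freeInB n t = true` iff variable `n` occurs free in `t`. -/
def freeInB (n : Nat) : TermCL → Bool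
  | .var m => m == n
  | .lam _ t => freeInB (n+1) t
  | .app t u => freeInB n t || freeInB n u
  | .pair t u => freeInB n t || freeInB n u
  | .proj _ t => freeInB n t
  | .efq _ t => freeInB n t
  | .parC _ u v => freeInB (n+1) u || freeInB (n+1) v
  | .par u v => freeInB n u || freeInB n v

/-- Typing for λ_CL: intuitionistic rules, the excluded-middle rule (parC)
and contraction (par). -/
inductive TypingCL : List Formula → TermCL → Formula → Prop where
  | var : Γ[n]? = some A → TypingCL Γ (.var n) A
  | lam : TypingCL (A::Γ) t B → TypingCL Γ (.lam A t) (.imp A B)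
  | app : TypingCL Γ t (.imp A B) → TypingCL Γ u A → TypingCL Γ (.app t u) B
  | pair : TypingCL Γ t A → TypingCL Γ u B → TypingCL Γ (.pair t u) (.conj A B)
  | projL : TypingCL Γ t (.conj A B) → TypingCL Γ (.proj false t) A
  | projR : TypingCL Γ t (.conj A B) → TypingCL Γ (.proj true t) B
  | efq : P.IsAtomic → P ≠ .bot → TypingCL Γ t .bot → TypingCL Γ (.efq P t) P
  | parC : TypingCL (.imp A .bot :: Γ) u C → TypingCL (A :: Γ) v C →
      TypingCL Γ (.parC A u v) C
  | par : TypingCL Γ u A → TypingCL Γ v A → TypingCL Γ (.par u v) A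

/-- Terms without parallel operators, i.e. simply typed λ-terms. -/
def NoPar : TermCL → Prop
  | .var _ => True
  | .lam _ t => NoPar t
  | .app t u => NoPar t ∧ NoPar u
  | .pair t u => NoPar t ∧ NoPar u
  | .proj _ t => NoPar t
  | .efq _ t => NoPar t
  | .parC _ _ _ => False
  | .par _ _ => False

/-- Simple parallel terms: parallel compositions (by ∥) of simply typed λ-terms. -/
inductive SimpleParallel : TermCL → Prop where
  | base : NoPar t → SimpleParallel t
  | par : SimpleParallel u → SimpleParallel v → SimpleParallel (.par u v)

/-- Parallel forms: parallel compositions (by ∥ₐ and ∥) of simply typed λ-terms. -/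
inductive ParallelForm : TermCL → Prop where
  | base : NoPar t → ParallelForm t
  | parC : ParallelForm u → ParallelForm v → ParallelForm (.parC A u v)
  | par : ParallelForm u → ParallelForm v → ParallelForm (.par u v)

/-- One-hole contexts. -/
inductive Ctx : Type where
  | hole : Ctx
  | lam : Formula → Ctx → Ctx
  | appL : Ctx → TermCL → Ctx
  | appR : TermCL → Ctx → Ctx
  | pairL : Ctx → TermCL → Ctx
  | pairR : TermCL → Ctx → Ctx
  | proj : Bool → Ctx → Ctx
  | efq : Formula → Ctx → Ctx
  | parCL : Formula → Ctx → TermCL → Ctx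
  | parCR : Formula → TermCL → Ctx → Ctx
  | parL : Ctx → TermCL → Ctx
  | parR : TermCL → Ctx → Ctx

def Ctx.fill : Ctx → TermCL → TermCL
  | .hole, t => t
  | .lam A c, t => .lam A (c.fill t)
  | .appL c u, t => .app (c.fill t) u
  | .appR u c, t => .app u (c.fill t)
  | .pairL c u, t => .pair (c.fill t) u
  | .pairR u c, t => .pair u (c.fill t)
  | .proj b c, t => .proj b (c.fill t)
  | .efq A c, t => .efq A (c.fill t)
  | .parCL A c u, t => .parC A (c.fill t) u
  | .parCR A u c, t => .parC A u (c.fill t)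
  | .parL c u, t => .par (c.fill t) u
  | .parR u c, t => .par u (c.fill t)

/-- Types of the binders crossed by the hole, innermost first. -/
def Ctx.ext : Ctx → List Formula
  | .hole => []
  | .lam A c => c.ext ++ [A]
  | .appL c _ => c.ext
  | .appR _ c => c.ext
  | .pairL c _ => c.ext
  | .pairR _ c => c.ext
  | .proj _ c => c.ext
  | .efq _ c => c.ext
  | .parCL A c _ => c.ext ++ [Formula.imp A .bot]
  | .parCR A _ c => c.ext ++ [A]
  | .parL c _ => c.ext
  | .parR _ c => c.ext

/-- Number of binders above the hole. -/
def Ctx.depth (c : Ctx) : Nat := c.ext.length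

def Ctx.rename (f : Nat → Nat) : Ctx → Ctx
  | .hole => .hole
  | .lam A c => .lam A (c.rename (liftF f))
  | .appL c u => .appL (c.rename f) (u.rename f)
  | .appR u c => .appR (u.rename f) (c.rename f)
  | .pairL c u => .pairL (c.rename f) (u.rename f)
  | .pairR u c => .pairR (u.rename f) (c.rename f)
  | .proj b c => .proj b (c.rename f)
  | .efq A c => .efq A (c.rename f)
  | .parCL A c u => .parCL A (c.rename (liftF f)) (u.rename (liftF f))
  | .parCR A u c => .parCR A (u.rename (liftF f)) (c.rename (liftF f))
  | .parL c u => .parL (c.rename f) (u.rename f)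
  | .parR u c => .parR (u.rename f) (c.rename f)

/-- The variable `a` does not occur (free) to the right of the hole. -/
def NoVarRight (a : Nat) : Ctx → Prop
  | .hole => True
  | .lam _ c => NoVarRight (a+1) c
  | .appL c t => NoVarRight a c ∧ freeInB a t = false
  | .appR _ c => NoVarRight a c
  | .pairL c t => NoVarRight a c ∧ freeInB a t = false
  | .pairR _ c => NoVarRight a c
  | .proj _ c => NoVarRight a c
  | .efq _ c => NoVarRight a c
  | .parCL _ c t => NoVarRight (a+1) c ∧ freeInB (a+1) t = false
  | .parCR _ _ c => NoVarRight (a+1) c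
  | .parL c t => NoVarRight a c ∧ freeInB a t = false
  | .parR _ c => NoVarRight a c

open Classical in
/-- Communication complexity: total number of symbols of the prime factors of
the communication kind `B` that are neither proper subformulas of the term's
type `A` nor strong subformulas of the types `fvs` of its free variables. -/
noncomputable def commComplexity (fvs : List Formula) (A B : Formula) : Nat :=
  ((primeFactors B).filter fun P =>
      decide (¬ (ProperSub P A ∨ ∃ Ai ∈ fvs, StrongSub P Ai))).foldr
    (fun P n => P.size + n) 0

/-- The types of the free variables of `t` in context `Γ`. -/
def freeTypes (Γ : List Formula) (t : TermCL) : List Formula :=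
  (List.range Γ.length).filterMap fun n => if freeInB n t then Γ[n]? else none

/-- Iterated pairs ⟨t₁,...,tₙ⟩. -/
def tupleTerm : List TermCL → TermCL
  | [] => .var 0
  | [t] => t
  | t :: l => .pair t (tupleTerm l)

/-- Iterated conjunctions Y₁ ∧ (Y₂ ∧ ... ∧ Yₙ). -/
def tupleType : List Formula → Formula
  | [] => .bot
  | [A] => A
  | A :: l => .conj A (tupleType l)

/-- The i-th projection of a tuple of length `len`. -/
def projSel (i len : Nat) (t : TermCL) : TermCL :=
  if i + 1 = len then (TermCL.proj true)^[i] t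
  else .proj false ((TermCL.proj true)^[i] t)

/-- The multiple substitution `u^{b/ȳ}` (with `b` the channel variable 0):
variables in `ys` (the free variables of `u` bound in the context, all < k)
are replaced by the corresponding projections of `b`, the remaining free
variables (≥ k+1, the variable k being the channel ā, absent) are readdressed. -/
def crossσ (k : Nat) (ys : List Nat) : Nat → TermCL := fun n =>
  if n < k then projSel (List.idxOf n ys) ys.length (.var 0)
  else .var (n - k)

/-- Intuitionistic (β/projection) reduction on λ_CL terms. -/
inductive RedI : TermCL → TermCL → Prop where
  | beta : RedI (.app (.lam A t) u) (TermCL.subst 0 u t)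
  | projL : RedI (.proj false (.pair t u)) t
  | projR : RedI (.proj true (.pair t u)) u
  | lam : RedI t t' → RedI (.lam A t) (.lam A t')
  | appL : RedI t t' → RedI (.app t u) (.app t' u)
  | appR : RedI u u' → RedI (.app t u) (.app t u')
  | pairL : RedI t t' → RedI (.pair t u) (.pair t' u)
  | pairR : RedI u u' → RedI (.pair t u) (.pair t u')
  | proj : RedI t t' → RedI (.proj b t) (.proj b t')
  | efq : RedI t t' → RedI (.efq A t) (.efq A t')
  | parCL : RedI u u' → RedI (.parC A u v) (.parC A u' v)
  | parCR : RedI v v' → RedI (.parC A u v) (.parC A u v')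
  | parL : RedI u u' → RedI (.par u v) (.par u' v)
  | parR : RedI v v' → RedI (.par u v) (.par u v')

/-- Normality with respect to intuitionistic reductions. -/
def IntuNormal (t : TermCL) : Prop := ∀ u, ¬ RedI t u
/-- The reduction relation of λ_CL, indexed by the typing context `Γ` and the
type `A` of the term being reduced (needed for the communication-complexity
side conditions). Rules: intuitionistic reductions, permutation reductions,
basic cross reductions, cross reductions and simplifications, closed under
all term constructors. -/
inductive RedCL : List Formula → Formula → TermCL → TermCL → Prop where
  -- intuitionistic reductions
  | beta : RedCL Γ A (.app (.lam X t) u) (TermCL.subst 0 u t)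
  | projL : RedCL Γ A (.proj false (.pair t u)) t
  | projR : RedCL Γ A (.proj true (.pair t u)) u
  -- permutations pushing constructors inside ∥ₐ
  | appParC : RedCL Γ A (.app w (.parC X u v))
      (.parC X (.app (liftT w) u) (.app (liftT w) v))
  | parCApp : RedCL Γ A (.app (.parC X u v) w)
      (.parC X (.app u (liftT w)) (.app v (liftT w)))
  | parCProj : RedCL Γ A (.proj b (.parC X u v)) (.parC X (.proj b u) (.proj b v))
  | parCEfq : RedCL Γ A (.efq P (.parC X u v)) (.parC X (.efq P u) (.efq P v))
  | lamParC : RedCL Γ A (.lam Y (.parC X u v))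
      (.parC X (.lam Y (swap01 u)) (.lam Y (swap01 v)))
  | pairParCL : RedCL Γ A (.pair (.parC X u v) w)
      (.parC X (.pair u (liftT w)) (.pair v (liftT w)))
  | pairParCR : RedCL Γ A (.pair w (.parC X u v))
      (.parC X (.pair (liftT w) u) (.pair (liftT w) v))
  -- permutations pushing constructors inside ∥
  | appPar : RedCL Γ A (.app w (.par u v)) (.par (.app w u) (.app w v))
  | parApp : RedCL Γ A (.app (.par u v) w) (.par (.app u w) (.app v w))
  | parProj : RedCL Γ A (.proj b (.par u v)) (.par (.proj b u) (.proj b v))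
  | parEfq : RedCL Γ A (.efq P (.par u v)) (.par (.efq P u) (.efq P v))
  | lamPar : RedCL Γ A (.lam Y (.par u v)) (.par (.lam Y u) (.lam Y v))
  | pairParL : RedCL Γ A (.pair (.par u v) w) (.par (.pair u w) (.pair v w))
  | pairParR : RedCL Γ A (.pair w (.par u v)) (.par (.pair w u) (.pair w v))
  -- permutations between parallel operators (scope extrusion), subject to
  -- positive communication complexity of the outer channel
  | parCparCL :
      commComplexity (freeTypes Γ (.parC Y (.parC X u v) w)) A Y > 0 →
      RedCL Γ A (.parC Y (.parC X u v) w)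
        (.parC X (.parC Y (swap01 u) (liftU1 w)) (.parC Y (swap01 v) (liftU1 w)))
  | parCparCR :
      commComplexity (freeTypes Γ (.parC Y w (.parC X u v))) A Y > 0 →
      RedCL Γ A (.parC Y w (.parC X u v))
        (.parC X (.parC Y (liftU1 w) (swap01 u)) (.parC Y (liftU1 w) (swap01 v)))
  | parParCL :
      commComplexity (freeTypes Γ (.parC Y (.par u v) w)) A Y > 0 →
      RedCL Γ A (.parC Y (.par u v) w) (.par (.parC Y u w) (.parC Y v w))
  | parParCR :
      commComplexity (freeTypes Γ (.parC Y w (.par u v))) A Y > 0 →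
      RedCL Γ A (.parC Y w (.par u v)) (.par (.parC Y w u) (.parC Y w v))
  -- basic cross reduction  C[ā u] ∥ₐ D ↦ D[u/a]
  | basicCross : ∀ (C : Ctx) (u D : TermCL),
      (∀ n, n ≤ C.depth → freeInB n u = false) →
      commComplexity (freeTypes Γ (.parC B (C.fill (.app (.var C.depth) u)) D)) A B > 0 →
      RedCL Γ A (.parC B (C.fill (.app (.var C.depth) u)) D)
        (TermCL.subst 0 (u.rename (fun n => n - (C.depth + 1))) D)
  -- simplifications  u ∥ₐ v ↦ u (a ∉ u)  and  u ∥ₐ v ↦ v (a ∉ v)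
  | simpL : freeInB 0 u = false →
      RedCL Γ A (.parC B u v) (TermCL.subst 0 (.var 0) u)
  | simpR : freeInB 0 v = false →
      RedCL Γ A (.parC B u v) (TermCL.subst 0 (.var 0) v)
  -- cross reduction  C[ā u] ∥ₐ D ↦ (C[b̄⟨ȳ⟩] ∥ₐ D) ∥_b D[u^{b/ȳ}/a]
  | cross : ∀ (C : Ctx) (u D : TermCL) (ys : List Nat),
      ys = (List.range C.depth).filter (fun n => freeInB n u) →
      ys ≠ [] →
      freeInB C.depth u = false →
      SimpleParallel (C.fill (.app (.var C.depth) u)) →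
      IntuNormal (C.fill (.app (.var C.depth) u)) →
      NoVarRight 0 C →
      commComplexity (freeTypes Γ (.parC B (C.fill (.app (.var C.depth) u)) D)) A B > 0 →
      RedCL Γ A (.parC B (C.fill (.app (.var C.depth) u)) D)
        (.parC (tupleType (ys.map fun n => C.ext.getD n .bot))
          (.parC B
            ((C.rename (liftF Nat.succ)).fill
              (.app (.var (C.depth + 1)) (tupleTerm (ys.map TermCL.var))))
            (liftU1 D))
          (TermCL.subst 0 (u.msubst (crossσ C.depth ys)) (liftU1 D)))
  -- congruence rules
  | congLam : RedCL (X::Γ) Y t t' → RedCL Γ (.imp X Y) (.lam X t) (.lam X t')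
  | congAppL : TypingCL Γ t (.imp X Y) → RedCL Γ (.imp X Y) t t' →
      RedCL Γ Y (.app t u) (.app t' u)
  | congAppR : TypingCL Γ u X → RedCL Γ X u u' →
      RedCL Γ Y (.app t u) (.app t u')
  | congPairL : RedCL Γ X t t' → RedCL Γ (.conj X Y) (.pair t u) (.pair t' u)
  | congPairR : RedCL Γ Y u u' → RedCL Γ (.conj X Y) (.pair t u) (.pair t u')
  | congProj : TypingCL Γ t (.conj X Y) → RedCL Γ (.conj X Y) t t' →
      RedCL Γ Z (.proj b t) (.proj b t')
  | congEfq : RedCL Γ .bot t t' → RedCL Γ P (.efq P t) (.efq P t')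
  | congParCL : RedCL (.imp X .bot :: Γ) A u u' →
      RedCL Γ A (.parC X u v) (.parC X u' v)
  | congParCR : RedCL (X :: Γ) A v v' →
      RedCL Γ A (.parC X u v) (.parC X u v')
  | congParL : RedCL Γ A u u' → RedCL Γ A (.par u v) (.par u' v)
  | congParR : RedCL Γ A v v' → RedCL Γ A (.par u v) (.par u v')
/-- every normal λ_CL-term is in parallel form. -/
theorem normal_is_parallel_form (Γ : List Formula) (t : TermCL) (A : Formula)
    (ht : TypingCL Γ t A) (hnf : ∀ u, ¬ RedCL Γ A t u) :
    ParallelForm t := by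
  revert hnf
  induction ht with
  | var _ =>
    intro hnf
    exact .base trivial
  | lam h ih =>
    intro hnf
    have pf := ih (fun w hw => hnf _ (RedCL.congLam hw))
    cases pf with
    | base hn => exact .base hn
    | parC hu hv => exact absurd RedCL.lamParC (hnf _)
    | par hu hv => exact absurd RedCL.lamPar (hnf _)
  | app ht hu iht ihu =>
    intro hnf
    have pt := iht (fun w hw => hnf _ (RedCL.congAppL ht hw))
    have pu := ihu (fun w hw => hnf _ (RedCL.congAppR hu hw))
    cases pt with
    | parC h1 h2 => exact absurd RedCL.parCApp (hnf _)
    | par h1 h2 => exact absurd RedCL.parApp (hnf _)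
    | base hnt =>
      cases pu with
      | parC h1 h2 => exact absurd RedCL.appParC (hnf _)
      | par h1 h2 => exact absurd RedCL.appPar (hnf _)
      | base hnu => exact .base ⟨hnt, hnu⟩
  | pair ht hu iht ihu =>
    intro hnf
    have pt := iht (fun w hw => hnf _ (RedCL.congPairL hw))
    have pu := ihu (fun w hw => hnf _ (RedCL.congPairR hw))
    cases pt with
    | parC h1 h2 => exact absurd RedCL.pairParCL (hnf _)
    | par h1 h2 => exact absurd RedCL.pairParL (hnf _)
    | base hnt =>
      cases pu with
      | parC h1 h2 => exact absurd RedCL.pairParCR (hnf _)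
      | par h1 h2 => exact absurd RedCL.pairParR (hnf _)
      | base hnu => exact .base ⟨hnt, hnu⟩
  | projL ht iht =>
    intro hnf
    have pt := iht (fun w hw => hnf _ (RedCL.congProj ht hw))
    cases pt with
    | base hn => exact .base hn
    | parC h1 h2 => exact absurd RedCL.parCProj (hnf _)
    | par h1 h2 => exact absurd RedCL.parProj (hnf _)
  | projR ht iht =>
    intro hnf
    have pt := iht (fun w hw => hnf _ (RedCL.congProj ht hw))
    cases pt with
    | base hn => exact .base hn
    | parC h1 h2 => exact absurd RedCL.parCProj (hnf _)
    | par h1 h2 => exact absurd RedCL.parProj (hnf _)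
  | efq _ _ ht iht =>
    intro hnf
    have pt := iht (fun w hw => hnf _ (RedCL.congEfq hw))
    cases pt with
    | base hn => exact .base hn
    | parC h1 h2 => exact absurd RedCL.parCEfq (hnf _)
    | par h1 h2 => exact absurd RedCL.parEfq (hnf _)
  | parC hu hv ihu ihv =>
    intro hnf
    exact .parC (ihu (fun w hw => hnf _ (RedCL.congParCL hw)))
      (ihv (fun w hw => hnf _ (RedCL.congParCR hw)))
  | par hu hv ihu ihv =>
    intro hnf
    exact .par (ihu (fun w hw => hnf _ (RedCL.congParL hw)))
      (ihv (fun w hw => hnf _ (RedCL.congParR hw)))
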